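/- If the pair (S, E) is observable, then the block upper-triangular pair (A_T, T) is observable, where A_T = [[A, e^{Aτ}E],[0, S]] and T = [I, 0]. -/

import Mathlib

open Matrix

/-- If the pair `(S, E)` is observable (Hautus test over `ℂ`), then the
block pair `(A_T, T)` with `A_T = [[A, e^{Aτ}E], [0, S]]` and `T = [I, 0]`
is observable. Observability of `(S, E)` is phrased as: for every `λ : ℂ`,
the stacked matrix `[λI - S; E]` has trivial kernel. -/
theorem observability_of_extended_pair {n s : ℕ}
    (A : Matrix (Fin n) (Fin n) ℝ) (E : Matrix (Fin n) (Fin s) ℝ)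
    (S : Matrix (Fin s) (Fin s) ℝ) (τ : ℝ)
    (hobs : ∀ (lam : ℂ) (v : Fin s → ℂ),
      (lam • (1 : Matrix (Fin s) (Fin s) ℂ) - S.map (algebraMap ℝ ℂ)).mulVec v = 0 →
      (E.map (algebraMap ℝ ℂ)).mulVec v = 0 → v = 0) :
    ∀ (lam : ℂ) (w : (Fin n ⊕ Fin s) → ℂ),
      (lam • (1 : Matrix (Fin n ⊕ Fin s) (Fin n ⊕ Fin s) ℂ) -
        (Matrix.fromBlocks A (NormedSpace.exp (τ • A) * E) 0 S).map
          (algebraMap ℝ ℂ)).mulVec w = 0 →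
      ((Matrix.fromCols (1 : Matrix (Fin n) (Fin n) ℝ)
          (0 : Matrix (Fin n) (Fin s) ℝ)).map (algebraMap ℝ ℂ)).mulVec w = 0 →
      w = 0 := by
  intro lam w h1 h2
  set f : ℝ →+* ℂ := algebraMap ℝ ℂ
  -- w₁ = 0 from h2
  have hw1 : ∀ i, w (Sum.inl i) = 0 := by
    intro i
    have := congrFun h2 i
    simpa [mulVec, dotProduct, Fintype.sum_sum_type, Matrix.fromCols,
      Matrix.one_apply, Finset.sum_ite_eq'] using this
  -- bottom block equation
  have hbot : (lam • (1 : Matrix (Fin s) (Fin s) ℂ) - S.map f).mulVec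
      (fun j => w (Sum.inr j)) = 0 := by
    funext j
    have := congrFun h1 (Sum.inr j)
    simpa [mulVec, dotProduct, Fintype.sum_sum_type, Matrix.fromBlocks,
      Matrix.one_apply, Matrix.sub_apply, Matrix.smul_apply, hw1] using this
  -- top block equation with w₁ = 0
  have htop : ((NormedSpace.exp (τ • A) * E).map f).mulVec
      (fun j => w (Sum.inr j)) = 0 := by
    funext i
    have := congrFun h1 (Sum.inl i)
    simpa [mulVec, dotProduct, Fintype.sum_sum_type, Matrix.fromBlocks,
      Matrix.one_apply, Matrix.sub_apply, Matrix.smul_apply, hw1, neg_eq_zero] using this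
  -- exp is a unit, so E w₂ = 0
  have hE : (E.map f).mulVec (fun j => w (Sum.inr j)) = 0 := by
    have hunit : IsUnit ((NormedSpace.exp (τ • A)).map f) :=
      (Matrix.isUnit_exp (τ • A)).map f.mapMatrix
    have hmul : ((NormedSpace.exp (τ • A)).map f).mulVec
        ((E.map f).mulVec (fun j => w (Sum.inr j))) = 0 := by
      rw [Matrix.mulVec_mulVec, ← Matrix.map_mul]
      exact htop
    have hinj := Matrix.mulVec_injective_iff_isUnit.mpr hunit
    exact hinj (hmul.trans (Matrix.mulVec_zero _).symm)
  have hw2 : (fun j => w (Sum.inr j)) = 0 := hobs lam _ hbot hE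
  funext i
  cases i with
  | inl i => exact hw1 i
  | inr j => exact congrFun hw2 j
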